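/- Let y = ⊕_{I ∈ S} a_I ⊗ x^{⊗I} be a resolution of f = ⊕_{i=0}^d f_i ⊗ y^{⊗i}, and let I ∈ S be such that the polyhedron M_I = { x ∈ ℝ^n : a_I + ⟨I, x⟩ = y(x) } has nonempty interior (full dimension n). For each pair of indices 0 ≤ i_1 < i_2 ≤ d and monomials (c_1, J_1) of f_{i_1} and (c_2, J_2) of f_{i_2} satisfying J_1 + i_1·I = J_2 + i_2·I and c_1 + i_1·a_I = c_2 + i_2·a_I, let M_{I,i_1,J_1,i_2,J_2} ⊆ M_I be the set of points x ∈ M_I at which c_1 + ⟨J_1, x⟩ + i_1·(a_I + ⟨I, x⟩) equals the minimum, over all 0 ≤ i ≤ d and all monomials (c, J) of f_i, of c + ⟨J, x⟩ + i·(a_I + ⟨I, x⟩). Then the sets M_{I,i_1,J_1,i_2,J_2} having nonempty interior constitute a partition of M_I: their union is all of M_I, and any two of them either coincide or intersect in a set with empty interior (dimension less than n). -/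

import Mathlib

open Finset

/-- A tropical polynomial in `n` variables: a finite nonempty family of monomials
`(c, J)` with real coefficient `c` and exponent `J ∈ ℕ^n`.  It defines the convex
piecewise-linear function `x ↦ min_J (c_J + ⟨J, x⟩)`. -/
structure TropPoly (n : ℕ) where
  monos : Finset (ℝ × (Fin n → ℕ))
  ne : monos.Nonempty

/-- The convex piecewise-linear function defined by a tropical polynomial. -/
noncomputable def TropPoly.eval {n : ℕ} (f : TropPoly n) (x : Fin n → ℝ) : ℝ :=
  f.monos.inf' f.ne fun p => p.1 + ∑ j, (p.2 j : ℝ) * x j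

/-- A tropical Newton–Puiseux polynomial in `n` variables: a finite nonempty family of
monomials `(a, I)` with rational coefficient `a` and exponent `I ∈ ℚ^n`. -/
structure NPPoly (n : ℕ) where
  monos : Finset (ℚ × (Fin n → ℚ))
  ne : monos.Nonempty

/-- The convex piecewise-linear function defined by a tropical Newton–Puiseux polynomial. -/
noncomputable def NPPoly.eval {n : ℕ} (y : NPPoly n) (x : Fin n → ℝ) : ℝ :=
  y.monos.inf' y.ne fun p => (p.1 : ℝ) + ∑ j, (p.2 j : ℝ) * x j

/-- The value of the term `f_i ⊗ y^{⊗ i}` of `f = ⊕_{i=0}^d f_i ⊗ y^{⊗ i}` at the point `x`,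
when the indeterminate `y` has the value `y0`. -/
noncomputable def termVal {n d : ℕ} (f : Fin (d+1) → TropPoly n) (x : Fin n → ℝ) (y0 : ℝ)
    (i : Fin (d+1)) : ℝ :=
  (f i).eval x + (i : ℕ) * y0

/-- At the point `x`, with value `y0` substituted for the indeterminate, the minimum of the
`d+1` values `f_i(x) + i·y0` is attained for at least two distinct indices `i`. -/
def TiesAt {n d : ℕ} (f : Fin (d+1) → TropPoly n) (x : Fin n → ℝ) (y0 : ℝ) : Prop :=
  ∃ i₁ i₂ : Fin (d+1), i₁ ≠ i₂ ∧ termVal f x y0 i₁ = termVal f x y0 i₂ ∧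
    ∀ i, termVal f x y0 i₁ ≤ termVal f x y0 i

/-- A function `y : ℝ^n → ℝ` is a resolution of `f = ⊕_{i=0}^d f_i ⊗ y^{⊗ i}` if at every
point `x` the minimum of the `d+1` values `f_i(x) + i·y(x)` is attained for at least two
distinct indices. -/
def IsResolution {n d : ℕ} (f : Fin (d+1) → TropPoly n) (y : (Fin n → ℝ) → ℝ) : Prop :=
  ∀ x, TiesAt f x (y x)

/-- The polyhedron `M_I` of points where the monomial `(a, I)` of the Newton-Puiseux
polynomial `y` attains the minimum defining `y`. -/
def MIset {n : ℕ} (y : NPPoly n) (a : ℚ) (I : Fin n → ℚ) : Set (Fin n → ℝ) :=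
  {x | (a : ℝ) + ∑ j, (I j : ℝ) * x j = y.eval x}

/-- The value at `x` of the monomial `(c, J)` of `f_i` multiplied (tropically) by the
`i`-th power of the monomial `(a, I)`. -/
noncomputable def cellVal {n d : ℕ} (i : Fin (d+1)) (c : ℝ) (J : Fin n → ℕ) (a : ℚ)
    (I : Fin n → ℚ) (x : Fin n → ℝ) : ℝ :=
  c + ∑ j, (J j : ℝ) * x j + (i : ℕ) * ((a : ℝ) + ∑ j, (I j : ℝ) * x j)

/-- Condition (7): the monomials `(c₁ ⊗ x^{J₁}) ⊗ (a ⊗ x^{I})^{i₁}` and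
`(c₂ ⊗ x^{J₂}) ⊗ (a ⊗ x^{I})^{i₂}` coincide. -/
def Compatible {n d : ℕ} (i₁ i₂ : Fin (d+1)) (c₁ : ℝ) (J₁ : Fin n → ℕ) (c₂ : ℝ)
    (J₂ : Fin n → ℕ) (a : ℚ) (I : Fin n → ℚ) : Prop :=
  (∀ j, (J₁ j : ℚ) + (i₁ : ℕ) * I j = (J₂ j : ℚ) + (i₂ : ℕ) * I j) ∧
    c₁ + (i₁ : ℕ) * (a : ℝ) = c₂ + (i₂ : ℕ) * (a : ℝ)

/-- The subset `M_{I,i₁,J₁,i₂,J₂}` of `M_I` of the points at which the monomial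
`(c₁ ⊗ x^{J₁}) ⊗ (a ⊗ x^{I})^{i₁}` attains the minimum among all the monomials
`(c ⊗ x^{J}) ⊗ (a ⊗ x^{I})^{i}` for monomials `(c, J)` of `f_i`, `0 ≤ i ≤ d`. -/
def cellSet {n d : ℕ} (f : Fin (d+1) → TropPoly n) (y : NPPoly n) (a : ℚ) (I : Fin n → ℚ)
    (i₁ : Fin (d+1)) (c₁ : ℝ) (J₁ : Fin n → ℕ) : Set (Fin n → ℝ) :=
  {x ∈ MIset y a I | ∀ i : Fin (d+1), ∀ p ∈ (f i).monos,
    cellVal i₁ c₁ J₁ a I x ≤ cellVal i p.1 p.2 a I x}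

/-- The family of all the full-dimensional sets `M_{I,i₁,J₁,i₂,J₂}` for pairs of monomials
satisfying condition (7). -/
def cellFamily {n d : ℕ} (f : Fin (d+1) → TropPoly n) (y : NPPoly n) (a : ℚ)
    (I : Fin n → ℚ) : Set (Set (Fin n → ℝ)) :=
  {M | ∃ (i₁ i₂ : Fin (d+1)) (c₁ c₂ : ℝ) (J₁ J₂ : Fin n → ℕ),
    i₁ < i₂ ∧ (c₁, J₁) ∈ (f i₁).monos ∧ (c₂, J₂) ∈ (f i₂).monos ∧
    Compatible i₁ i₂ c₁ J₁ c₂ J₂ a I ∧ M = cellSet f y a I i₁ c₁ J₁ ∧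
    (interior M).Nonempty}

section Auxiliary

variable {n d : ℕ}

/-- The affine function `x ↦ c + ⟨v, x⟩`. -/
noncomputable def affF (c : ℝ) (v : Fin n → ℝ) (x : Fin n → ℝ) : ℝ := c + ∑ j, v j * x j

lemma affF_continuous (c : ℝ) (v : Fin n → ℝ) : Continuous (affF c v) :=
  continuous_const.add (continuous_finset_sum _ fun j _ =>
    continuous_const.mul (continuous_apply j))

lemma affF_combo (c : ℝ) (v : Fin n → ℝ) (x z : Fin n → ℝ) {s t : ℝ} (hst : s + t = 1) :
    affF c v (s • x + t • z) = s * affF c v x + t * affF c v z := by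
  unfold affF
  have h1 : ∑ j, v j * (s • x + t • z) j = s * ∑ j, v j * x j + t * ∑ j, v j * z j := by
    rw [Finset.mul_sum, Finset.mul_sum, ← Finset.sum_add_distrib]
    refine Finset.sum_congr rfl fun j _ => ?_
    simp only [Pi.add_apply, Pi.smul_apply, smul_eq_mul]
    ring
  rw [h1]
  linear_combination (-c) * hst

lemma convex_affLe (c₁ c₂ : ℝ) (v₁ v₂ : Fin n → ℝ) :
    Convex ℝ {x : Fin n → ℝ | affF c₁ v₁ x ≤ affF c₂ v₂ x} := by
  intro x hx z hz s t hs ht hst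
  simp only [Set.mem_setOf_eq] at hx hz ⊢
  rw [affF_combo _ _ _ _ hst, affF_combo _ _ _ _ hst]
  exact add_le_add (mul_le_mul_of_nonneg_left hx hs) (mul_le_mul_of_nonneg_left hz ht)

/-- If two affine functions agree on a set with nonempty interior, they are equal. -/
lemma affF_eq_of_interior_nonempty {c₁ c₂ : ℝ} {v₁ v₂ : Fin n → ℝ}
    (h : (interior {x : Fin n → ℝ | affF c₁ v₁ x = affF c₂ v₂ x}).Nonempty) :
    c₁ = c₂ ∧ ∀ j, v₁ j = v₂ j := by
  obtain ⟨x₀, hx₀⟩ := h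
  rw [mem_interior_iff_mem_nhds, Metric.mem_nhds_iff] at hx₀
  obtain ⟨ε, hε, hball⟩ := hx₀
  have hx0 : affF c₁ v₁ x₀ = affF c₂ v₂ x₀ := hball (Metric.mem_ball_self hε)
  have hv : ∀ j, v₁ j = v₂ j := by
    intro j
    set z := Function.update x₀ j (x₀ j + ε / 2) with hz
    have hzball : z ∈ Metric.ball x₀ ε := by
      rw [Metric.mem_ball]
      have hle : dist z x₀ ≤ ε / 2 := by
        rw [dist_pi_le_iff (by positivity)]
        intro k
        rw [hz, Function.update_apply]
        by_cases hk : k = j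
        · rw [if_pos hk, Real.dist_eq]
          have he : x₀ j + ε / 2 - x₀ k = ε / 2 := by rw [hk]; ring
          rw [he, abs_of_nonneg (by positivity)]
        · rw [if_neg hk, dist_self]
          positivity
      linarith
    have hzeq : affF c₁ v₁ z = affF c₂ v₂ z := hball hzball
    have hsum : ∀ v : Fin n → ℝ, ∑ k, v k * z k = ∑ k, v k * x₀ k + v j * (ε / 2) := by
      intro v
      have hterm : ∀ k, v k * z k = v k * x₀ k + (if k = j then v k * (ε / 2) else 0) := by
        intro k
        rw [hz, Function.update_apply]
        by_cases hk : k = j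
        · rw [if_pos hk, if_pos hk, hk]
          ring
        · rw [if_neg hk, if_neg hk, add_zero]
      rw [Finset.sum_congr rfl fun k _ => hterm k, Finset.sum_add_distrib,
        Finset.sum_ite_eq' Finset.univ j (fun k => v k * (ε / 2))]
      simp
    unfold affF at hzeq hx0
    rw [hsum v₁, hsum v₂] at hzeq
    have heq : v₁ j * (ε / 2) = v₂ j * (ε / 2) := by linarith
    exact mul_right_cancel₀ (by positivity) heq
  refine ⟨?_, hv⟩
  unfold affF at hx0
  have hs : ∑ j, v₁ j * x₀ j = ∑ j, v₂ j * x₀ j :=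
    Finset.sum_congr rfl fun j _ => by rw [hv j]
  linarith

lemma interior_union_empty {X : Type*} [TopologicalSpace X] {A B : Set X}
    (hA : IsClosed A) (hiA : interior A = ∅) (hiB : interior B = ∅) :
    interior (A ∪ B) = ∅ := by
  rw [Set.eq_empty_iff_forall_notMem]
  intro x hx
  rw [mem_interior] at hx
  obtain ⟨O, hOsub, hOopen, hxO⟩ := hx
  have h1 : O \ A ⊆ interior B :=
    interior_maximal (fun w hw => (hOsub hw.1).resolve_left hw.2) (hOopen.sdiff hA)
  rw [hiB, Set.subset_empty_iff, Set.diff_eq_empty] at h1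
  have h2 : x ∈ interior A := interior_maximal h1 hOopen hxO
  rw [hiA] at h2
  exact h2

lemma interior_finset_biUnion_empty {X α : Type*} [TopologicalSpace X] (F : α → Set X)
    (s : Finset α) :
    (∀ a ∈ s, IsClosed (F a)) → (∀ a ∈ s, interior (F a) = ∅) →
    interior (⋃ a ∈ s, F a) = ∅ := by
  classical
  induction s using Finset.induction_on with
  | empty => intro _ _; simp
  | @insert a s ha ih =>
    intro hc hi
    rw [Finset.set_biUnion_insert]
    exact interior_union_empty (hc a (mem_insert_self a s)) (hi a (mem_insert_self a s))
      (ih (fun b hb => hc b (mem_insert_of_mem hb)) fun b hb => hi b (mem_insert_of_mem hb))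

lemma cellVal_eq_affF (i : Fin (d+1)) (c : ℝ) (J : Fin n → ℕ) (a : ℚ) (I : Fin n → ℚ)
    (x : Fin n → ℝ) :
    cellVal i c J a I x
      = affF (c + (i : ℕ) * (a : ℝ)) (fun j => (J j : ℝ) + (i : ℕ) * (I j : ℝ)) x := by
  unfold cellVal affF
  have h : ∀ j, ((J j : ℝ) + (i : ℕ) * (I j : ℝ)) * x j
      = (J j : ℝ) * x j + (i : ℕ) * ((I j : ℝ) * x j) := fun j => by ring
  rw [Finset.sum_congr rfl fun j _ => h j, Finset.sum_add_distrib, ← Finset.mul_sum]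
  ring

lemma continuous_cellVal (i : Fin (d+1)) (c : ℝ) (J : Fin n → ℕ) (a : ℚ) (I : Fin n → ℚ) :
    Continuous fun x : Fin n → ℝ => cellVal i c J a I x := by
  have h : (fun x : Fin n → ℝ => cellVal i c J a I x)
      = affF (c + (i : ℕ) * (a : ℝ)) (fun j => (J j : ℝ) + (i : ℕ) * (I j : ℝ)) :=
    funext fun x => cellVal_eq_affF i c J a I x
  rw [h]
  exact affF_continuous _ _

lemma MIset_eq {y : NPPoly n} {a : ℚ} {I : Fin n → ℚ} (hmem : (a, I) ∈ y.monos) :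
    MIset y a I = ⋂ p ∈ y.monos,
      {x : Fin n → ℝ | affF (a : ℝ) (fun j => (I j : ℝ)) x
        ≤ affF (p.1 : ℝ) (fun j => (p.2 j : ℝ)) x} := by
  ext x
  simp only [Set.mem_iInter, Set.mem_setOf_eq, MIset, NPPoly.eval, affF]
  constructor
  · intro h p hp
    rw [h]
    exact Finset.inf'_le _ hp
  · intro h
    exact le_antisymm (Finset.le_inf' _ _ h) (Finset.inf'_le _ hmem)

lemma isClosed_MIset {y : NPPoly n} {a : ℚ} {I : Fin n → ℚ} (hmem : (a, I) ∈ y.monos) :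
    IsClosed (MIset y a I) := by
  rw [MIset_eq hmem]
  exact isClosed_biInter fun p hp =>
    isClosed_le (affF_continuous _ _) (affF_continuous _ _)

lemma convex_MIset {y : NPPoly n} {a : ℚ} {I : Fin n → ℚ} (hmem : (a, I) ∈ y.monos) :
    Convex ℝ (MIset y a I) := by
  rw [MIset_eq hmem]
  exact convex_iInter fun p => convex_iInter fun hp => convex_affLe _ _ _ _

lemma cellSet_eq {f : Fin (d+1) → TropPoly n} {y : NPPoly n} {a : ℚ} {I : Fin n → ℚ}
    (i₁ : Fin (d+1)) (c₁ : ℝ) (J₁ : Fin n → ℕ) :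
    cellSet f y a I i₁ c₁ J₁ = MIset y a I ∩ ⋂ i : Fin (d+1), ⋂ p ∈ (f i).monos,
      {x : Fin n → ℝ | cellVal i₁ c₁ J₁ a I x ≤ cellVal i p.1 p.2 a I x} := by
  ext x
  simp only [cellSet, Set.mem_setOf_eq, Set.mem_inter_iff, Set.mem_iInter, Set.mem_sep_iff]

lemma isClosed_cellSet {f : Fin (d+1) → TropPoly n} {y : NPPoly n} {a : ℚ} {I : Fin n → ℚ}
    (hmem : (a, I) ∈ y.monos) (i₁ : Fin (d+1)) (c₁ : ℝ) (J₁ : Fin n → ℕ) :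
    IsClosed (cellSet f y a I i₁ c₁ J₁) := by
  rw [cellSet_eq]
  exact (isClosed_MIset hmem).inter (isClosed_iInter fun i => isClosed_biInter fun p hp =>
    isClosed_le (continuous_cellVal _ _ _ _ _) (continuous_cellVal _ _ _ _ _))

lemma cellVal_eq_of_interior {i₁ i₂ : Fin (d+1)} {c₁ c₂ : ℝ} {J₁ J₂ : Fin n → ℕ}
    {a : ℚ} {I : Fin n → ℚ}
    (h : (interior {x : Fin n → ℝ |
      cellVal i₁ c₁ J₁ a I x = cellVal i₂ c₂ J₂ a I x}).Nonempty) :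
    c₁ + (i₁ : ℕ) * (a : ℝ) = c₂ + (i₂ : ℕ) * (a : ℝ) ∧
      ∀ j, (J₁ j : ℝ) + (i₁ : ℕ) * (I j : ℝ) = (J₂ j : ℝ) + (i₂ : ℕ) * (I j : ℝ) := by
  have hs : {x : Fin n → ℝ | cellVal i₁ c₁ J₁ a I x = cellVal i₂ c₂ J₂ a I x}
      = {x : Fin n → ℝ |
          affF (c₁ + (i₁ : ℕ) * (a : ℝ)) (fun j => (J₁ j : ℝ) + (i₁ : ℕ) * (I j : ℝ)) x
        = affF (c₂ + (i₂ : ℕ) * (a : ℝ)) (fun j => (J₂ j : ℝ) + (i₂ : ℕ) * (I j : ℝ)) x} :=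
    Set.ext fun x => by rw [Set.mem_setOf_eq, Set.mem_setOf_eq, cellVal_eq_affF, cellVal_eq_affF]
  rw [hs] at h
  exact affF_eq_of_interior_nonempty h

lemma cellVal_funext {i₁ i₂ : Fin (d+1)} {c₁ c₂ : ℝ} {J₁ J₂ : Fin n → ℕ}
    {a : ℚ} {I : Fin n → ℚ}
    (hc : c₁ + (i₁ : ℕ) * (a : ℝ) = c₂ + (i₂ : ℕ) * (a : ℝ))
    (hv : ∀ j, (J₁ j : ℝ) + (i₁ : ℕ) * (I j : ℝ) = (J₂ j : ℝ) + (i₂ : ℕ) * (I j : ℝ)) :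
    ∀ x, cellVal i₁ c₁ J₁ a I x = cellVal i₂ c₂ J₂ a I x := by
  intro x
  have hveq : (fun j => (J₁ j : ℝ) + (i₁ : ℕ) * (I j : ℝ))
      = fun j => (J₂ j : ℝ) + (i₂ : ℕ) * (I j : ℝ) := funext hv
  rw [cellVal_eq_affF, cellVal_eq_affF, hc, hveq]

lemma cellSet_congr {f : Fin (d+1) → TropPoly n} {y : NPPoly n} {a : ℚ} {I : Fin n → ℚ}
    {i₁ i₂ : Fin (d+1)} {c₁ c₂ : ℝ} {J₁ J₂ : Fin n → ℕ}
    (hfun : ∀ x, cellVal i₁ c₁ J₁ a I x = cellVal i₂ c₂ J₂ a I x) :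
    cellSet f y a I i₁ c₁ J₁ = cellSet f y a I i₂ c₂ J₂ := by
  ext x
  simp only [cellSet, Set.mem_sep_iff]
  constructor
  · rintro ⟨hM, hmin⟩
    exact ⟨hM, fun i p hp => le_trans (hfun x).ge (hmin i p hp)⟩
  · rintro ⟨hM, hmin⟩
    exact ⟨hM, fun i p hp => le_trans (hfun x).le (hmin i p hp)⟩

lemma exists_cell {f : Fin (d+1) → TropPoly n} {y : NPPoly n} {a : ℚ} {I : Fin n → ℚ}
    {x : Fin n → ℝ} (hx : x ∈ MIset y a I) :
    ∃ i : Fin (d+1), ∃ p ∈ (f i).monos, x ∈ cellSet f y a I i p.1 p.2 := by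
  classical
  obtain ⟨q, hq⟩ := (f 0).ne
  have hTne : (Finset.univ.sigma fun i => (f i).monos).Nonempty :=
    ⟨⟨0, q⟩, by simp [Finset.mem_sigma, hq]⟩
  obtain ⟨s, hs, hmin⟩ :=
    Finset.exists_mem_eq_inf' hTne fun s => cellVal s.1 s.2.1 s.2.2 a I x
  refine ⟨s.1, s.2, (Finset.mem_sigma.mp hs).2, hx, ?_⟩
  intro i p hp
  exact le_of_eq_of_le hmin.symm
    (Finset.inf'_le (b := (⟨i, p⟩ : (_ : Fin (d+1)) × ℝ × (Fin n → ℕ))) _ (Finset.mem_sigma.mpr ⟨Finset.mem_univ i, hp⟩))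

lemma cell_mem_family {f : Fin (d+1) → TropPoly n} {y : NPPoly n}
    (hres : IsResolution f y.eval) {a : ℚ} {I : Fin n → ℚ}
    {i₁ : Fin (d+1)} {c₁ : ℝ} {J₁ : Fin n → ℕ} (h₁ : (c₁, J₁) ∈ (f i₁).monos)
    (hC : (interior (cellSet f y a I i₁ c₁ J₁)).Nonempty) :
    cellSet f y a I i₁ c₁ J₁ ∈ cellFamily f y a I := by
  classical
  set C := cellSet f y a I i₁ c₁ J₁ with hCdef
  set T : Finset ((_ : Fin (d+1)) × ℝ × (Fin n → ℕ)) :=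
    (Finset.univ.sigma fun i => (f i).monos).filter (fun s => s.1 ≠ i₁) with hT
  have hcover : interior C ⊆ ⋃ s ∈ T,
      {x : Fin n → ℝ | cellVal i₁ c₁ J₁ a I x = cellVal s.1 s.2.1 s.2.2 a I x} := by
    intro z hz
    have hzC : z ∈ C := interior_subset hz
    obtain ⟨hzM, hzmin⟩ := hzC
    have hy : y.eval z = (a : ℝ) + ∑ j, (I j : ℝ) * z j := hzM.symm
    obtain ⟨ia, ib, hab, habeq, hmin⟩ := hres z
    obtain ⟨i₂, hi₂ne, hi₂min⟩ : ∃ i₂, i₂ ≠ i₁ ∧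
        ∀ i, termVal f z (y.eval z) i₂ ≤ termVal f z (y.eval z) i := by
      by_cases h : ia = i₁
      · exact ⟨ib, fun he => hab (by rw [h, he]),
          fun i => le_trans habeq.symm.le (hmin i)⟩
      · exact ⟨ia, h, hmin⟩
    obtain ⟨p, hp, hpeq⟩ :=
      Finset.exists_mem_eq_inf' (f i₂).ne fun p => p.1 + ∑ j, (p.2 j : ℝ) * z j
    have hmemT : (⟨i₂, p⟩ : (_ : Fin (d+1)) × ℝ × (Fin n → ℕ)) ∈ T := by
      simp [hT, Finset.mem_filter, Finset.mem_sigma, hp, hi₂ne]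
    refine Set.mem_biUnion hmemT ?_
    show cellVal i₁ c₁ J₁ a I z = cellVal i₂ p.1 p.2 a I z
    have h1 : cellVal i₂ p.1 p.2 a I z = termVal f z (y.eval z) i₂ := by
      rw [hy]
      unfold cellVal termVal TropPoly.eval
      rw [hpeq]
    have h2 : termVal f z (y.eval z) i₁ ≤ cellVal i₁ c₁ J₁ a I z := by
      rw [hy]
      unfold cellVal termVal TropPoly.eval
      exact add_le_add (Finset.inf'_le _ h₁) le_rfl
    have h3 := hzmin i₂ p hp
    have h4 := hi₂min i₁
    linarith
  have hex : ∃ s ∈ T, (interior {x : Fin n → ℝ |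
      cellVal i₁ c₁ J₁ a I x = cellVal s.1 s.2.1 s.2.2 a I x}).Nonempty := by
    by_contra hcon
    push_neg at hcon
    have hempty : interior (⋃ s ∈ T,
        {x : Fin n → ℝ | cellVal i₁ c₁ J₁ a I x = cellVal s.1 s.2.1 s.2.2 a I x}) = ∅ :=
      interior_finset_biUnion_empty _ T
        (fun s _ => isClosed_eq (continuous_cellVal _ _ _ _ _) (continuous_cellVal _ _ _ _ _))
        (fun s hs => hcon s hs)
    obtain ⟨w, hw⟩ := hC
    have : w ∈ interior (⋃ s ∈ T,
        {x : Fin n → ℝ | cellVal i₁ c₁ J₁ a I x = cellVal s.1 s.2.1 s.2.2 a I x}) :=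
      interior_maximal hcover isOpen_interior hw
    rw [hempty] at this
    exact this
  obtain ⟨s, hsT, hsint⟩ := hex
  obtain ⟨hconst, hcoef⟩ := cellVal_eq_of_interior hsint
  set i₂ := s.1 with hi2
  set c₂ := s.2.1 with hc2
  set J₂ := s.2.2 with hJ2
  have hsT' := Finset.mem_filter.mp hsT
  have hi₂ne : i₂ ≠ i₁ := hsT'.2
  have h₂mem : (c₂, J₂) ∈ (f i₂).monos := by
    have := (Finset.mem_sigma.mp hsT'.1).2
    simpa [hc2, hJ2, hi2] using this
  have hqcoef : ∀ j, (J₁ j : ℚ) + (i₁ : ℕ) * I j = (J₂ j : ℚ) + (i₂ : ℕ) * I j := by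
    intro j
    exact_mod_cast hcoef j
  have hfun := cellVal_funext hconst hcoef
  rcases lt_trichotomy i₁ i₂ with hlt | heq | hgt
  · exact ⟨i₁, i₂, c₁, c₂, J₁, J₂, hlt, h₁, h₂mem, ⟨hqcoef, hconst⟩, rfl, hC⟩
  · exact absurd heq.symm hi₂ne
  · refine ⟨i₂, i₁, c₂, c₁, J₂, J₁, hgt, h₂mem, h₁,
      ⟨fun j => (hqcoef j).symm, hconst.symm⟩, ?_, hC⟩
    exact (cellSet_congr hfun)

end Auxiliary


/-- If `y` is a resolution of `f` and the cell `M_I` of a monomial `(a, I)` of `y` is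
full-dimensional, then the full-dimensional sets `M_{I,i₁,J₁,i₂,J₂}` form a partition of
`M_I`: their union is `M_I`, and any two of them either coincide or intersect in a set with
empty interior. -/
theorem cellFamily_partitions {n d : ℕ} (f : Fin (d+1) → TropPoly n) (y : NPPoly n)
    (hres : IsResolution f y.eval) (a : ℚ) (I : Fin n → ℚ) (hmem : (a, I) ∈ y.monos)
    (hfull : (interior (MIset y a I)).Nonempty) :
    ⋃₀ cellFamily f y a I = MIset y a I ∧
      ∀ A ∈ cellFamily f y a I, ∀ B ∈ cellFamily f y a I,
        A = B ∨ interior (A ∩ B) = (∅ : Set (Fin n → ℝ)) := by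
  classical
  constructor
  · apply Set.Subset.antisymm
    · rintro x ⟨M, hM, hxM⟩
      obtain ⟨i₁, i₂, c₁, c₂, J₁, J₂, _, _, _, _, hMeq, _⟩ := hM
      rw [hMeq] at hxM
      exact hxM.1
    · intro x hx
      by_contra hxU
      have hfam_sub : cellFamily f y a I ⊆
          (fun s : (_ : Fin (d+1)) × ℝ × (Fin n → ℕ) =>
            cellSet f y a I s.1 s.2.1 s.2.2) ''
            ↑(Finset.univ.sigma fun i => (f i).monos) := by
        rintro M ⟨i₁, i₂, c₁, c₂, J₁, J₂, _, h₁, _, _, hMeq, _⟩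
        exact ⟨⟨i₁, (c₁, J₁)⟩, by simp [Finset.mem_sigma, h₁], hMeq.symm⟩
      have hfam_fin : (cellFamily f y a I).Finite :=
        Set.Finite.subset
          (((Finset.univ.sigma fun i => (f i).monos).finite_toSet).image _) hfam_sub
      have hUclosed : IsClosed (⋃₀ cellFamily f y a I) := by
        rw [Set.sUnion_eq_biUnion]
        refine Set.Finite.isClosed_biUnion hfam_fin ?_
        rintro M ⟨i₁, i₂, c₁, c₂, J₁, J₂, _, _, _, _, hMeq, _⟩
        rw [hMeq]
        exact isClosed_cellSet hmem _ _ _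
      obtain ⟨ε, hε, hball⟩ := Metric.isOpen_iff.mp hUclosed.isOpen_compl x hxU
      obtain ⟨w, hw⟩ := hfull
      have hD0 : (0:ℝ) ≤ dist w x := dist_nonneg
      set b : ℝ := min 1 (ε / (2 * (dist w x + 1))) with hb
      have hb0 : 0 < b := lt_min one_pos (by positivity)
      have hb1 : b ≤ 1 := min_le_left _ _
      have hzint : (1 - b) • x + b • w ∈ interior (MIset y a I) :=
        (convex_MIset hmem).combo_self_interior_mem_interior hx hw
          (by linarith) hb0 (by ring)
      have hzball : (1 - b) • x + b • w ∈ Metric.ball x ε := by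
        rw [Metric.mem_ball, dist_eq_norm]
        have hzx : (1 - b) • x + b • w - x = b • (w - x) := by
          rw [sub_smul, one_smul, smul_sub]; abel
        rw [hzx, norm_smul, Real.norm_eq_abs, abs_of_pos hb0]
        have h1 : ‖w - x‖ = dist w x := (dist_eq_norm w x).symm
        rw [h1]
        have h2 : b ≤ ε / (2 * (dist w x + 1)) := min_le_right _ _
        have h3 : b * dist w x ≤ ε / (2 * (dist w x + 1)) * dist w x :=
          mul_le_mul_of_nonneg_right h2 hD0
        have h4 : ε / (2 * (dist w x + 1)) * dist w x < ε := by
          rw [div_mul_eq_mul_div, div_lt_iff₀ (by positivity)]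
          nlinarith
        linarith
      have hOV : Metric.ball x ε ∩ interior (MIset y a I) ⊆
          ⋃ s ∈ (Finset.univ.sigma fun i => (f i).monos).filter
            (fun s => interior (cellSet f y a I s.1 s.2.1 s.2.2) = ∅),
            cellSet f y a I s.1 s.2.1 s.2.2 := by
        rintro w' ⟨hw'b, hw'i⟩
        have hw'M : w' ∈ MIset y a I := interior_subset hw'i
        obtain ⟨i, p, hp, hcell⟩ := exists_cell (f := f) hw'M
        by_cases hi : (interior (cellSet f y a I i p.1 p.2)).Nonempty
        · exfalso
          have hfam := cell_mem_family hres
            (show (p.1, p.2) ∈ (f i).monos by simpa using hp) hi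
          exact hball hw'b ⟨_, hfam, hcell⟩
        · rw [Set.not_nonempty_iff_eq_empty] at hi
          have hmemb : (⟨i, p⟩ : (_ : Fin (d+1)) × ℝ × (Fin n → ℕ)) ∈
              (Finset.univ.sigma fun i => (f i).monos).filter
                (fun s => interior (cellSet f y a I s.1 s.2.1 s.2.2) = ∅) := by
            simp only [Finset.mem_filter, Finset.mem_sigma, Finset.mem_univ, true_and]
            exact ⟨hp, hi⟩
          exact Set.mem_biUnion hmemb hcell
      have hVempty : interior (⋃ s ∈ (Finset.univ.sigma fun i => (f i).monos).filter
            (fun s => interior (cellSet f y a I s.1 s.2.1 s.2.2) = ∅),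
            cellSet f y a I s.1 s.2.1 s.2.2) = ∅ :=
        interior_finset_biUnion_empty _ _
          (fun s _ => isClosed_cellSet hmem _ _ _)
          (fun s hs => (Finset.mem_filter.mp hs).2)
      have hzV := interior_maximal hOV (Metric.isOpen_ball.inter isOpen_interior)
        ⟨hzball, hzint⟩
      rw [hVempty] at hzV
      exact hzV
  · rintro A ⟨i₁, i₂, c₁, c₂, J₁, J₂, _, h₁, _, _, hAeq, _⟩
      B ⟨i₁', i₂', c₁', c₂', J₁', J₂', _, h₁', _, _, hBeq, _⟩
    by_cases hABi : (interior (A ∩ B)).Nonempty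
    · left
      have hsub : A ∩ B ⊆
          {x : Fin n → ℝ | cellVal i₁ c₁ J₁ a I x = cellVal i₁' c₁' J₁' a I x} := by
        rintro x ⟨hxA, hxB⟩
        rw [hAeq] at hxA
        rw [hBeq] at hxB
        exact le_antisymm (hxA.2 i₁' (c₁', J₁') h₁') (hxB.2 i₁ (c₁, J₁) h₁)
      have hint : (interior {x : Fin n → ℝ |
          cellVal i₁ c₁ J₁ a I x = cellVal i₁' c₁' J₁' a I x}).Nonempty :=
        hABi.mono (interior_mono hsub)
      obtain ⟨hc, hv⟩ := cellVal_eq_of_interior hint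
      rw [hAeq, hBeq]
      exact cellSet_congr (cellVal_funext hc hv)
    · right
      exact Set.not_nonempty_iff_eq_empty.mp hABi
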